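/- Let H be a Hermitian matrix with spectral decomposition H = Σ_j E_j Π_j, let σ, δ > 0, and let ρ be a density matrix. Then the tail of the filter representation of the Gaussian stabilization is exponentially small: ‖∫_{ℝ ∖ [−‖H‖_∞−δ, ‖H‖_∞+δ]} G_σ(x) ρ G_σ(x) dx‖₁ ≤ erfc(√2 σ δ) ≤ e^{−2σ²δ²}, where erfc(z) = (2/√π)∫_z^∞ e^{−u²} du is the complementary error function. -/

import Mathlib

open MeasureTheory Matrix
open scoped ComplexOrder

noncomputable section

attribute [local instance] Matrix.frobeniusNormedAddCommGroup Matrix.frobeniusNormedSpace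

/-- The trace norm `‖A‖₁ = Tr √(A†A)` of a complex matrix. -/
def traceNorm {n : ℕ} (A : Matrix (Fin n) (Fin n) ℂ) : ℝ :=
  ((Matrix.posSemidef_conjTranspose_mul_self A).1.eigenvectorUnitary.1 *
      Matrix.diagonal (((↑) : ℝ → ℂ) ∘ Real.sqrt ∘ (Matrix.posSemidef_conjTranspose_mul_self A).1.eigenvalues) *
      (star (Matrix.posSemidef_conjTranspose_mul_self A).1.eigenvectorUnitary :
        Matrix (Fin n) (Fin n) ℂ)).trace.re

/-- The operator norm `‖A‖_∞` (largest singular value) of a complex matrix. -/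
def opNorm {n : ℕ} (A : Matrix (Fin n) (Fin n) ℂ) : ℝ :=
  ‖Matrix.toEuclideanCLM (𝕜 := ℂ) A‖

/-- The Gaussian energy filter `G_σ(x) = Σ_j (√2 σ/√π)^{1/2} e^{−σ²(E_j−x)²} Π_j`. -/
def gaussianFilter {n m : ℕ} (E : Fin m → ℝ) (P : Fin m → Matrix (Fin n) (Fin n) ℂ)
    (σ x : ℝ) : Matrix (Fin n) (Fin n) ℂ :=
  ∑ j, (Real.sqrt (Real.sqrt 2 * σ / Real.sqrt Real.pi) *
      Real.exp (-σ ^ 2 * (E j - x) ^ 2)) • P j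

/-- The complementary error function `erfc(z) = (2/√π) ∫_z^∞ e^{−u²} du`. -/
def erfc (z : ℝ) : ℝ :=
  2 / Real.sqrt Real.pi * ∫ u in Set.Ioi z, Real.exp (-u ^ 2)

/-! ### Auxiliary real-analysis lemmas -/

lemma int_shift (g : ℝ → ℝ) (a c : ℝ) :
    ∫ x in Set.Ioi a, g (x - c) = ∫ x in Set.Ioi (a - c), g x := by
  have mp : MeasurePreserving (fun x : ℝ => x - c) volume volume :=
    measurePreserving_sub_right volume c
  have me : MeasurableEmbedding (fun x : ℝ => x - c) :=
    (Homeomorph.subRight c).isClosedEmbedding.measurableEmbedding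
  have h := mp.setIntegral_preimage_emb me g (Set.Ioi (a - c))
  rw [show (fun x : ℝ => x - c) ⁻¹' Set.Ioi (a - c) = Set.Ioi a by
    ext x; simp [sub_lt_sub_iff_right]] at h
  exact h

lemma gauss_integrable {b : ℝ} (hb : 0 < b) (c : ℝ) :
    Integrable (fun x : ℝ => Real.exp (-b * (x - c) ^ 2)) :=
  (integrable_exp_neg_mul_sq hb).comp_sub_right c

lemma erfc_aux : ∀ z : ℝ, 0 ≤ z → 2 / Real.sqrt Real.pi * ∫ u in Set.Ioi z, Real.exp (-u ^ 2)
    ≤ Real.exp (-z ^ 2) := by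
  intro z hz
  have h1 : (∫ u in Set.Ioi z, Real.exp (-u ^ 2)) = ∫ x in Set.Ioi (0:ℝ), Real.exp (-(x + z) ^ 2) := by
    have := int_shift (fun u => Real.exp (-u ^ 2)) 0 (-z)
    simp only [sub_neg_eq_add, zero_add] at this
    exact this.symm
  have hint1 : IntegrableOn (fun x : ℝ => Real.exp (-(x + z) ^ 2)) (Set.Ioi 0) := by
    have := gauss_integrable one_pos (-z)
    simp only [sub_neg_eq_add, one_mul, neg_mul] at this
    exact this.integrableOn
  have hint2 : IntegrableOn (fun x : ℝ => Real.exp (-z ^ 2) * Real.exp (-x ^ 2)) (Set.Ioi 0) := by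
    have := gauss_integrable one_pos 0
    simp only [sub_zero, one_mul, neg_mul] at this
    exact (this.const_mul _).integrableOn
  have h2 : (∫ x in Set.Ioi (0:ℝ), Real.exp (-(x + z) ^ 2))
      ≤ ∫ x in Set.Ioi (0:ℝ), Real.exp (-z ^ 2) * Real.exp (-x ^ 2) := by
    refine setIntegral_mono_on hint1 hint2 measurableSet_Ioi (fun x hx => ?_)
    rw [← Real.exp_add]
    apply Real.exp_le_exp.2
    nlinarith [le_of_lt (Set.mem_Ioi.mp hx)]
  have h3 : (∫ x in Set.Ioi (0:ℝ), Real.exp (-z ^ 2) * Real.exp (-x ^ 2))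
      = Real.exp (-z ^ 2) * (Real.sqrt Real.pi / 2) := by
    rw [integral_const_mul]
    congr 1
    have := integral_gaussian_Ioi 1
    simp only [one_mul, div_one, neg_mul] at this
    rw [this]
  have hpi : 0 < Real.sqrt Real.pi := Real.sqrt_pos.2 Real.pi_pos
  calc 2 / Real.sqrt Real.pi * ∫ u in Set.Ioi z, Real.exp (-u ^ 2)
      ≤ 2 / Real.sqrt Real.pi * (Real.exp (-z ^ 2) * (Real.sqrt Real.pi / 2)) := by
        apply mul_le_mul_of_nonneg_left _ (by positivity)
        rw [h1, ← h3]; exact h2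
    _ = Real.exp (-z ^ 2) := by field_simp

lemma tail_right (σ δ E M : ℝ) (hσ : 0 < σ) (hδ : 0 < δ) (hEM : E ≤ M) :
    ∫ x in Set.Ioi (M + δ), Real.sqrt 2 * σ / Real.sqrt Real.pi *
        Real.exp (-(2 * σ ^ 2) * (x - E) ^ 2)
      ≤ 1 / Real.sqrt Real.pi * ∫ u in Set.Ioi (Real.sqrt 2 * σ * δ), Real.exp (-u ^ 2) := by
  have hpi : 0 < Real.sqrt Real.pi := Real.sqrt_pos.2 Real.pi_pos
  have hs2 : 0 < Real.sqrt 2 * σ := by positivity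
  have hb : 0 < 2 * σ ^ 2 := by positivity
  set C := Real.sqrt 2 * σ / Real.sqrt Real.pi with hC
  have hC0 : 0 < C := by positivity
  have hint1 : IntegrableOn (fun x : ℝ => C * Real.exp (-(2 * σ ^ 2) * (x - E) ^ 2))
      (Set.Ioi (M + δ)) := (((gauss_integrable hb E)).const_mul C).integrableOn
  have hint2 : IntegrableOn (fun x : ℝ => C * Real.exp (-(2 * σ ^ 2) * (x - M) ^ 2))
      (Set.Ioi (M + δ)) := (((gauss_integrable hb M)).const_mul C).integrableOn
  have step1 : ∫ x in Set.Ioi (M + δ), C * Real.exp (-(2 * σ ^ 2) * (x - E) ^ 2)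
      ≤ ∫ x in Set.Ioi (M + δ), C * Real.exp (-(2 * σ ^ 2) * (x - M) ^ 2) := by
    refine setIntegral_mono_on hint1 hint2 measurableSet_Ioi (fun x hx => ?_)
    have hx' : M + δ < x := hx
    apply mul_le_mul_of_nonneg_left _ hC0.le
    apply Real.exp_le_exp.2
    nlinarith [mul_nonneg hb.le (mul_nonneg (sub_nonneg.2 hEM)
      (show (0:ℝ) ≤ 2 * x - E - M by linarith))]
  have key : ∀ x : ℝ, Real.exp (-(2 * σ ^ 2) * (x - M) ^ 2)
      = Real.exp (-(Real.sqrt 2 * σ * x - Real.sqrt 2 * σ * M) ^ 2) := by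
    intro x
    congr 1
    have h2 : Real.sqrt 2 ^ 2 = 2 := Real.sq_sqrt (by norm_num)
    nlinarith [h2]
  have step2 : ∫ x in Set.Ioi (M + δ), C * Real.exp (-(2 * σ ^ 2) * (x - M) ^ 2)
      = C * (Real.sqrt 2 * σ)⁻¹ * ∫ u in Set.Ioi (Real.sqrt 2 * σ * δ), Real.exp (-u ^ 2) := by
    simp_rw [key]
    rw [integral_const_mul]
    have := integral_comp_mul_left_Ioi
      (fun y : ℝ => Real.exp (-(y - Real.sqrt 2 * σ * M) ^ 2)) (M + δ) hs2
    rw [this, smul_eq_mul, int_shift (fun u : ℝ => Real.exp (-u ^ 2))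
      (Real.sqrt 2 * σ * (M + δ)) (Real.sqrt 2 * σ * M)]
    rw [show Real.sqrt 2 * σ * (M + δ) - Real.sqrt 2 * σ * M = Real.sqrt 2 * σ * δ by ring]
    ring
  have hfrac : C * (Real.sqrt 2 * σ)⁻¹ = 1 / Real.sqrt Real.pi := by
    rw [hC]; field_simp
  calc _ ≤ _ := step1
    _ = _ := step2
    _ = _ := by rw [hfrac]

lemma tail_full (σ δ E M : ℝ) (hσ : 0 < σ) (hδ : 0 < δ) (hEM : |E| ≤ M) :
    ∫ x in (Set.Icc (-(M + δ)) (M + δ))ᶜ, Real.sqrt 2 * σ / Real.sqrt Real.pi *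
        Real.exp (-(2 * σ ^ 2) * (x - E) ^ 2)
      ≤ 2 / Real.sqrt Real.pi * ∫ u in Set.Ioi (Real.sqrt 2 * σ * δ), Real.exp (-u ^ 2) := by
  have hb : 0 < 2 * σ ^ 2 := by positivity
  set C := Real.sqrt 2 * σ / Real.sqrt Real.pi with hC
  have hsplit : (Set.Icc (-(M + δ)) (M + δ))ᶜ = Set.Iio (-(M + δ)) ∪ Set.Ioi (M + δ) := by
    ext x; simp only [Set.mem_compl_iff, Set.mem_Icc, not_and_or, not_le, Set.mem_union,
      Set.mem_Iio, Set.mem_Ioi]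
  have hM0 : 0 ≤ M := le_trans (abs_nonneg E) hEM
  have hdisj : Disjoint (Set.Iio (-(M + δ))) (Set.Ioi (M + δ)) := by
    apply Set.disjoint_left.2
    intro x hx hx'
    simp only [Set.mem_Iio, Set.mem_Ioi] at hx hx'
    linarith
  have hint : Integrable (fun x : ℝ => C * Real.exp (-(2 * σ ^ 2) * (x - E) ^ 2)) :=
    (gauss_integrable hb E).const_mul C
  have hsum : ∫ x in (Set.Icc (-(M + δ)) (M + δ))ᶜ, C * Real.exp (-(2 * σ ^ 2) * (x - E) ^ 2)
      = (∫ x in Set.Iio (-(M + δ)), C * Real.exp (-(2 * σ ^ 2) * (x - E) ^ 2))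
      + ∫ x in Set.Ioi (M + δ), C * Real.exp (-(2 * σ ^ 2) * (x - E) ^ 2) := by
    rw [hsplit]
    exact setIntegral_union hdisj measurableSet_Ioi hint.integrableOn hint.integrableOn
  have hleft : ∫ x in Set.Iio (-(M + δ)), C * Real.exp (-(2 * σ ^ 2) * (x - E) ^ 2)
      ≤ 1 / Real.sqrt Real.pi * ∫ u in Set.Ioi (Real.sqrt 2 * σ * δ), Real.exp (-u ^ 2) := by
    rw [← integral_Iic_eq_integral_Iio]
    have hneg := integral_comp_neg_Iic (-(M + δ))
      (fun y : ℝ => C * Real.exp (-(2 * σ ^ 2) * (y - -E) ^ 2))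
    simp only [neg_neg] at hneg
    rw [show (∫ x in Set.Iic (-(M + δ)), C * Real.exp (-(2 * σ ^ 2) * (x - E) ^ 2))
        = ∫ x in Set.Iic (-(M + δ)), C * Real.exp (-(2 * σ ^ 2) * (-x - -E) ^ 2) by
      refine setIntegral_congr_fun measurableSet_Iic (fun x _ => ?_)
      congr 1; ring_nf]
    rw [hneg]
    exact tail_right σ δ (-E) M hσ hδ (by have := (abs_le.mp hEM).1; linarith)
  have hright := tail_right σ δ E M hσ hδ (le_of_abs_le hEM)
  have hI : 0 ≤ ∫ u in Set.Ioi (Real.sqrt 2 * σ * δ), Real.exp (-u ^ 2) :=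
    setIntegral_nonneg measurableSet_Ioi (fun u _ => (Real.exp_pos _).le)
  rw [hsum]
  have : 2 / Real.sqrt Real.pi * ∫ u in Set.Ioi (Real.sqrt 2 * σ * δ), Real.exp (-u ^ 2)
      = 1 / Real.sqrt Real.pi * (∫ u in Set.Ioi (Real.sqrt 2 * σ * δ), Real.exp (-u ^ 2))
      + 1 / Real.sqrt Real.pi * ∫ u in Set.Ioi (Real.sqrt 2 * σ * δ), Real.exp (-u ^ 2) := by
    ring
  rw [this]
  exact add_le_add hleft hright

/-! ### Auxiliary matrix lemmas -/

lemma sum_mulVec' {n m : ℕ} (A : Fin m → Matrix (Fin n) (Fin n) ℂ) (w : Fin n → ℂ) :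
    (∑ j, A j) *ᵥ w = ∑ j, A j *ᵥ w := by
  ext i
  simp only [Matrix.mulVec, dotProduct, Finset.sum_apply, Matrix.sum_apply,
    Finset.sum_mul]
  rw [Finset.sum_comm]

open scoped MatrixOrder in
lemma traceNorm_of_posSemidef {n : ℕ} {A : Matrix (Fin n) (Fin n) ℂ} (hA : A.PosSemidef) :
    traceNorm A = A.trace.re := by
  unfold traceNorm
  congr 2
  have h := IsHermitian.cfc_eq (Matrix.posSemidef_conjTranspose_mul_self A).1 Real.sqrt
  rw [IsHermitian.cfc, Unitary.conjStarAlgAut_apply] at h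
  refine h.symm.trans ?_
  rw [hA.1.eq, ← cfcₙ_eq_cfc (hf0 := Real.sqrt_zero),
    ← CFC.sqrt_eq_real_sqrt _ (by have := (posSemidef_conjTranspose_mul_self A).nonneg; rwa [hA.1.eq] at this), CFC.sqrt_mul_self A hA.nonneg]

/-- Frobenius topology on matrices. -/
abbrev frobTop {n : ℕ} : TopologicalSpace (Matrix (Fin n) (Fin n) ℂ) :=
  UniformSpace.toTopologicalSpace (self := PseudoMetricSpace.toUniformSpace
    (self := (Matrix.frobeniusNormedAddCommGroup : NormedAddCommGroup
      (Matrix (Fin n) (Fin n) ℂ)).toMetricSpace.toPseudoMetricSpace))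

attribute [local instance] frobTop

/-- quadratic form as a continuous linear map -/
def qfCLM {n : ℕ} (v : Fin n → ℂ) : Matrix (Fin n) (Fin n) ℂ →L[ℂ] ℂ :=
  LinearMap.toContinuousLinearMap
    { toFun := fun M => star v ⬝ᵥ M *ᵥ v
      map_add' := by intro M N; simp [Matrix.add_mulVec, dotProduct_add]
      map_smul' := by intro c M; simp [Matrix.smul_mulVec, dotProduct_smul] }

lemma qfCLM_apply {n : ℕ} (v : Fin n → ℂ) (M : Matrix (Fin n) (Fin n) ℂ) :
    qfCLM v M = star v ⬝ᵥ M *ᵥ v := rfl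

def traceCLM (n : ℕ) : Matrix (Fin n) (Fin n) ℂ →L[ℂ] ℂ :=
  LinearMap.toContinuousLinearMap (Matrix.traceLinearMap (Fin n) ℂ ℂ)

lemma traceCLM_apply {n : ℕ} (M : Matrix (Fin n) (Fin n) ℂ) : traceCLM n M = M.trace := rfl

def conjTransposeCLM (n : ℕ) : Matrix (Fin n) (Fin n) ℂ →L[ℝ] Matrix (Fin n) (Fin n) ℂ :=
  LinearMap.toContinuousLinearMap
    { toFun := fun M => Mᴴ
      map_add' := by intro M N; simp
      map_smul' := by intro c M; simp }

lemma posSemidef_integral {n : ℕ} {f : ℝ → Matrix (Fin n) (Fin n) ℂ} {μ : Measure ℝ}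
    (hf : Integrable f μ) (h : ∀ x, (f x).PosSemidef) :
    (∫ x, f x ∂μ).PosSemidef := by
  refine .of_dotProduct_mulVec_nonneg ?_ ?_
  · have : (conjTransposeCLM n) (∫ x, f x ∂μ) = ∫ x, (conjTransposeCLM n) (f x) ∂μ :=
      (ContinuousLinearMap.integral_comp_comm _ hf).symm
    have h2 : ∀ x, (conjTransposeCLM n) (f x) = f x := fun x => (h x).1.eq
    simp only [h2] at this
    exact this
  · intro v
    have hcomm : (qfCLM v) (∫ x, f x ∂μ) = ∫ x, (qfCLM v) (f x) ∂μ :=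
      (ContinuousLinearMap.integral_comp_comm _ hf).symm
    rw [← qfCLM_apply, hcomm]
    have hint : Integrable (fun x => (qfCLM v) (f x)) μ := (qfCLM v).integrable_comp hf
    have hnn : ∀ x, 0 ≤ (qfCLM v) (f x) := fun x => (h x).dotProduct_mulVec_nonneg v
    rw [Complex.nonneg_iff]
    constructor
    · rw [← Complex.reCLM_apply, ← ContinuousLinearMap.integral_comp_comm _ hint]
      exact integral_nonneg fun x => (Complex.nonneg_iff.mp (hnn x)).1
    · rw [← Complex.imCLM_apply, ← ContinuousLinearMap.integral_comp_comm _ hint]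
      symm
      simp only [Complex.imCLM_apply]
      have : ∀ x, ((qfCLM v) (f x)).im = 0 := fun x => ((Complex.nonneg_iff.mp (hnn x)).2).symm
      simp [this]

lemma trace_re_nonneg_of_psd {n : ℕ} {A : Matrix (Fin n) (Fin n) ℂ} (hA : A.PosSemidef) :
    0 ≤ A.trace.re := by
  have h : ∀ i, 0 ≤ (A i i).re := by
    intro i
    have h2 := hA.dotProduct_mulVec_nonneg (Pi.single i 1)
    have : star (Pi.single i 1 : Fin n → ℂ) ⬝ᵥ A *ᵥ Pi.single i 1 = A i i := by
      rw [← Pi.single_star i 1, star_one, Matrix.mulVec_single]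
      simp [single_dotProduct]
    rw [this] at h2
    exact (Complex.nonneg_iff.mp h2).1
  rw [Matrix.trace]
  simp only [Complex.re_sum]
  exact Finset.sum_nonneg fun i _ => h i

lemma abs_eig_le {n : ℕ} (H : Matrix (Fin n) (Fin n) ℂ) (e : ℝ) (w : Fin n → ℂ) (hw : w ≠ 0)
    (hHw : H *ᵥ w = (e : ℂ) • w) : |e| ≤ ‖Matrix.toEuclideanCLM (𝕜 := ℂ) H‖ := by
  set x : EuclideanSpace ℂ (Fin n) := (WithLp.equiv 2 (Fin n → ℂ)).symm w with hx
  have hx0 : x ≠ 0 := by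
    intro h
    apply hw
    have := congrArg (WithLp.equiv 2 (Fin n → ℂ)) h
    simpa [hx] using this
  have happ : Matrix.toEuclideanCLM (𝕜 := ℂ) H x = (e : ℂ) • x := by
    rw [hx, WithLp.equiv_symm_apply, Matrix.toEuclideanCLM_toLp, hHw]
    rfl
  have hle := (Matrix.toEuclideanCLM (𝕜 := ℂ) H).le_opNorm x
  rw [happ, norm_smul] at hle
  have hxn : 0 < ‖x‖ := norm_pos_iff.2 hx0
  have : ‖(e : ℂ)‖ = |e| := by simp
  rw [this] at hle
  exact le_of_mul_le_mul_right (by linarith) hxn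

/-- The tail of the filter representation of Gaussian stabilization is
exponentially small:
`‖∫_{ℝ∖[−‖H‖_∞−δ,‖H‖_∞+δ]} G_σ(x) ρ G_σ(x) dx‖₁ ≤ erfc(√2 σδ) ≤ e^{−2σ²δ²}`. -/
theorem gaussian_filter_tail_bound
    {n m : ℕ} (H : Matrix (Fin n) (Fin n) ℂ)
    (E : Fin m → ℝ) (P : Fin m → Matrix (Fin n) (Fin n) ℂ)
    (hE : Function.Injective E)
    (hHerm : ∀ j, (P j)ᴴ = P j)
    (hOrth : ∀ j k, P j * P k = if j = k then P j else 0)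
    (hSum : ∑ j, P j = 1)
    (hH : H = ∑ j, (E j : ℂ) • P j)
    (σ δ : ℝ) (hσ : 0 < σ) (hδ : 0 < δ)
    (ρ : Matrix (Fin n) (Fin n) ℂ) (hρ : ρ.PosSemidef) (hρ1 : ρ.trace = 1) :
    traceNorm (∫ x in (Set.Icc (-(opNorm H + δ)) (opNorm H + δ))ᶜ,
        gaussianFilter E P σ x * ρ * gaussianFilter E P σ x) ≤
      erfc (Real.sqrt 2 * σ * δ) ∧
    erfc (Real.sqrt 2 * σ * δ) ≤ Real.exp (-2 * σ ^ 2 * δ ^ 2) := by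
  have hpi : 0 < Real.sqrt Real.pi := Real.sqrt_pos.2 Real.pi_pos
  set Mo := opNorm H with hMo
  set z := Real.sqrt 2 * σ * δ with hzdef
  set S := (Set.Icc (-(Mo + δ)) (Mo + δ))ᶜ with hSdef
  set K := Real.sqrt (Real.sqrt 2 * σ / Real.sqrt Real.pi) with hKdef
  set c : Fin m → ℝ → ℝ := fun j x => K * Real.exp (-σ ^ 2 * (E j - x) ^ 2) with hcdef
  have hG : ∀ x, gaussianFilter E P σ x = ∑ j, (c j x) • P j := fun x => rfl
  have hK2 : K ^ 2 = Real.sqrt 2 * σ / Real.sqrt Real.pi := Real.sq_sqrt (by positivity)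
  have hK0 : 0 ≤ K := Real.sqrt_nonneg _
  -- integrability of coefficient products
  have hint_c : ∀ j, Integrable (c j) := by
    intro j
    have heq : c j = fun x => K * Real.exp (-σ ^ 2 * (x - E j) ^ 2) := by
      funext x
      simp only [hcdef]
      congr 2
      ring
    rw [heq]
    exact (gauss_integrable (by positivity) (E j)).const_mul K
  have hbound : ∀ j x, ‖c j x‖ ≤ K := by
    intro j x
    have h1 : Real.exp (-σ ^ 2 * (E j - x) ^ 2) ≤ 1 := by
      rw [Real.exp_le_one_iff]
      nlinarith [sq_nonneg (E j - x), sq_nonneg σ]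
    have h2 : c j x = K * Real.exp (-σ ^ 2 * (E j - x) ^ 2) := rfl
    rw [Real.norm_eq_abs, h2, abs_of_nonneg (by positivity)]
    calc K * Real.exp (-σ ^ 2 * (E j - x) ^ 2) ≤ K * 1 := mul_le_mul_of_nonneg_left h1 hK0
      _ = K := mul_one K
  have hcont : ∀ j, Continuous (c j) := by
    intro j
    apply Continuous.mul continuous_const
    exact (Real.continuous_exp.comp (by continuity))
  have hint_cc : ∀ j k, Integrable (fun x => c j x * c k x) := by
    intro j k
    exact (hint_c k).bdd_mul (hcont j).aestronglyMeasurable (ae_of_all _ (hbound j))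
  -- expansion of the integrand
  have hf_eq : ∀ x, gaussianFilter E P σ x * ρ * gaussianFilter E P σ x
      = ∑ j, ∑ k, (c j x * c k x) • (P j * ρ * P k) := by
    intro x
    rw [hG]
    simp only [Finset.sum_mul, Finset.mul_sum, smul_mul_assoc, mul_smul_comm, smul_smul,
      Finset.smul_sum]
    rw [Finset.sum_comm]
    refine Finset.sum_congr rfl fun j _ => Finset.sum_congr rfl fun k _ => ?_
    rw [mul_comm (c k x) (c j x)]
  have hfInt : IntegrableOn (fun x => gaussianFilter E P σ x * ρ * gaussianFilter E P σ x) S := by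
    rw [show (fun x => gaussianFilter E P σ x * ρ * gaussianFilter E P σ x)
        = fun x => ∑ j, ∑ k, (c j x * c k x) • (P j * ρ * P k) from funext hf_eq]
    apply integrable_finset_sum
    intro j _
    apply integrable_finset_sum
    intro k _
    exact ((hint_cc j k).smul_const _).integrableOn
  have hGherm : ∀ x, (gaussianFilter E P σ x)ᴴ = gaussianFilter E P σ x := by
    intro x
    rw [hG, Matrix.conjTranspose_sum]
    refine Finset.sum_congr rfl fun j _ => ?_
    rw [Matrix.conjTranspose_smul, hHerm, star_trivial]
  have hfPSD : ∀ x, (gaussianFilter E P σ x * ρ * gaussianFilter E P σ x).PosSemidef := by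
    intro x
    have h := hρ.mul_mul_conjTranspose_same (gaussianFilter E P σ x)
    rwa [hGherm x] at h
  set X := ∫ x in S, gaussianFilter E P σ x * ρ * gaussianFilter E P σ x with hXdef
  have hXpsd : X.PosSemidef := posSemidef_integral hfInt hfPSD
  set t : Fin m → ℝ := fun j => ((P j * ρ).trace).re with htdef
  have htnn : ∀ j, 0 ≤ t j := by
    intro j
    have hpsd : (P j * ρ * P j).PosSemidef := by
      have h := hρ.mul_mul_conjTranspose_same (P j)
      rwa [hHerm j] at h
    have h2 : (P j * ρ).trace = (P j * ρ * P j).trace := by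
      calc (P j * ρ).trace = (P j * P j * ρ).trace := by rw [hOrth j j, if_pos rfl]
        _ = (P j * ρ * P j).trace := (Matrix.trace_mul_cycle (P j) ρ (P j)).symm
    show 0 ≤ ((P j * ρ).trace).re
    rw [h2]
    exact trace_re_nonneg_of_psd hpsd
  have htsum : ∑ j, t j = 1 := by
    have h1 : ∑ j, (P j * ρ).trace = ρ.trace := by
      rw [← Matrix.trace_sum, ← Finset.sum_mul, hSum, one_mul]
    have h2 : (∑ j, t j) = ∑ j, ((P j * ρ).trace).re := rfl
    rw [h2, ← Complex.re_sum, h1, hρ1, Complex.one_re]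
  have heig : ∀ j, P j ≠ 0 → |E j| ≤ Mo := by
    intro j hPj
    obtain ⟨v, hv⟩ : ∃ v : Fin n → ℂ, P j *ᵥ v ≠ 0 := by
      by_contra h
      push_neg at h
      apply hPj
      ext i k
      have h2 := congrFun (h (Pi.single k 1)) i
      rw [Matrix.mulVec_single] at h2
      simpa using h2
    have hkey : ∀ k, P k *ᵥ (P j *ᵥ v) = if k = j then P j *ᵥ v else 0 := by
      intro k
      rw [Matrix.mulVec_mulVec, hOrth k j]
      split_ifs with hkj
      · rw [hkj]
      · rw [Matrix.zero_mulVec]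
    have hHw : H *ᵥ (P j *ᵥ v) = ((E j : ℂ)) • (P j *ᵥ v) := by
      rw [hH, sum_mulVec']
      simp only [Matrix.smul_mulVec, hkey, smul_ite, smul_zero]
      simp [Finset.sum_ite_eq']
    exact abs_eig_le H (E j) (P j *ᵥ v) hv hHw
  have hGG : ∀ x, gaussianFilter E P σ x * gaussianFilter E P σ x
      = ∑ j, (c j x * c j x) • P j := by
    intro x
    rw [hG]
    simp only [Finset.sum_mul, Finset.mul_sum, smul_mul_assoc, mul_smul_comm, hOrth,
      smul_ite, smul_zero, Finset.smul_sum, smul_smul, Finset.sum_ite_eq', Finset.mem_univ,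
      if_true]
  have htrace_pt : ∀ x, ((gaussianFilter E P σ x * ρ * gaussianFilter E P σ x).trace).re
      = ∑ j, (c j x * c j x) * t j := by
    intro x
    have h1 : (gaussianFilter E P σ x * ρ * gaussianFilter E P σ x).trace
        = ((gaussianFilter E P σ x * gaussianFilter E P σ x) * ρ).trace :=
      Matrix.trace_mul_cycle (gaussianFilter E P σ x) ρ (gaussianFilter E P σ x)
    rw [h1, hGG, Finset.sum_mul, Matrix.trace_sum]
    simp only [smul_mul_assoc, Matrix.trace_smul]
    rw [Complex.re_sum]
    refine Finset.sum_congr rfl fun j _ => ?_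
    simp [Complex.smul_re, htdef]
  have hXtrace : X.trace.re = ∑ j, (∫ x in S, c j x * c j x) * t j := by
    have h1 : X.trace = ∫ x in S, (gaussianFilter E P σ x * ρ * gaussianFilter E P σ x).trace := by
      rw [hXdef, ← traceCLM_apply, ← ContinuousLinearMap.integral_comp_comm _ hfInt]
      rfl
    have h2 : Integrable (fun x => (gaussianFilter E P σ x * ρ * gaussianFilter E P σ x).trace)
        (volume.restrict S) := (traceCLM n).integrable_comp hfInt
    have h3 : X.trace.re
        = ∫ x in S, ((gaussianFilter E P σ x * ρ * gaussianFilter E P σ x).trace).re := by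
      rw [h1, ← Complex.reCLM_apply, ← ContinuousLinearMap.integral_comp_comm _ h2]
      rfl
    rw [h3]
    simp only [htrace_pt]
    rw [integral_finset_sum _ (fun j _ => ((hint_cc j j).mul_const (t j)).integrableOn)]
    refine Finset.sum_congr rfl fun j _ => ?_
    exact integral_mul_const (t j) _
  have hjb : ∀ j, (∫ x in S, c j x * c j x) * t j ≤ erfc z * t j := by
    intro j
    by_cases hPj : P j = 0
    · have h0 : t j = 0 := by
        show ((P j * ρ).trace).re = 0
        rw [hPj, Matrix.zero_mul, Matrix.trace_zero]
        simp
      rw [h0, mul_zero, mul_zero]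
    · have hEj : |E j| ≤ Mo := heig j hPj
      have hcc : ∀ x, c j x * c j x
          = Real.sqrt 2 * σ / Real.sqrt Real.pi * Real.exp (-(2 * σ ^ 2) * (x - E j) ^ 2) := by
        intro x
        have h2 : c j x = K * Real.exp (-σ ^ 2 * (E j - x) ^ 2) := rfl
        rw [h2, ← hK2]
        rw [show K * Real.exp (-σ ^ 2 * (E j - x) ^ 2) * (K * Real.exp (-σ ^ 2 * (E j - x) ^ 2))
            = K ^ 2 * Real.exp (-σ ^ 2 * (E j - x) ^ 2 + -σ ^ 2 * (E j - x) ^ 2) by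
          rw [Real.exp_add]; ring]
        congr 1
        ring
      apply mul_le_mul_of_nonneg_right _ (htnn j)
      simp only [hcc]
      have hB := tail_full σ δ (E j) Mo hσ hδ hEj
      simpa only [erfc, hzdef, hSdef] using hB
  have part1 : traceNorm X ≤ erfc z := by
    rw [traceNorm_of_posSemidef hXpsd, hXtrace]
    calc ∑ j, (∫ x in S, c j x * c j x) * t j ≤ ∑ j, erfc z * t j :=
          Finset.sum_le_sum fun j _ => hjb j
      _ = erfc z * ∑ j, t j := by rw [Finset.mul_sum]
      _ = erfc z := by rw [htsum, mul_one]
  refine ⟨part1, ?_⟩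
  have hz0 : 0 ≤ z := by rw [hzdef]; positivity
  have h := erfc_aux z hz0
  have hz2 : z ^ 2 = 2 * σ ^ 2 * δ ^ 2 := by
    rw [hzdef]
    have hs : Real.sqrt 2 ^ 2 = 2 := Real.sq_sqrt (by norm_num)
    nlinarith [hs]
  calc erfc z = 2 / Real.sqrt Real.pi * ∫ u in Set.Ioi z, Real.exp (-u ^ 2) := rfl
    _ ≤ Real.exp (-z ^ 2) := h
    _ = Real.exp (-2 * σ ^ 2 * δ ^ 2) := by rw [hz2]; ring_nf
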